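/- If < is an F-ordering of a Steiner triple system M over a subset A, then the linear order obtained as the sum (A, <↾A) + (M∖A, <↾(M∖A)) is an F-ordering of M over A in which A is an initial segment; moreover if < is a well-order then so is the new order. -/

import Mathlib

/-- A Steiner quasigroup operation. -/
def IsSQ {M : Type*} (op : M → M → M) : Prop :=
  (∀ x y, op x y = op y x) ∧ (∀ x, op x x = x) ∧ (∀ x y, op x (op x y) = y)

/-- An F-ordering of the STS `(M, op)` over `A`: a (strict) linear ordering such that every
`a ∈ M` is the product of a unique pair `{a₁, a₂}` with each `aᵢ ∈ A` or `aᵢ < a`. -/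
def IsFOrderOver {M : Type*} (op : M → M → M) (A : Set M) (r : M → M → Prop) : Prop :=
  IsStrictTotalOrder M r ∧
    ∀ a : M, ∃ a₁ a₂ : M, a = op a₁ a₂ ∧ (a₁ ∈ A ∨ r a₁ a) ∧ (a₂ ∈ A ∨ r a₂ a) ∧
      ∀ b₁ b₂ : M, a = op b₁ b₂ → (b₁ ∈ A ∨ r b₁ a) → (b₂ ∈ A ∨ r b₂ a) →
        ({b₁, b₂} : Set M) = {a₁, a₂}

/-- The sum order `(A, r↾A) + (M∖A, r↾(M∖A))`: everything in `A` precedes everything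
outside `A`. -/
def sumOrder {M : Type*} (A : Set M) (r : M → M → Prop) : M → M → Prop := fun a b =>
  (a ∈ A ∧ b ∉ A) ∨ (a ∈ A ∧ b ∈ A ∧ r a b) ∨ (a ∉ A ∧ b ∉ A ∧ r a b)

lemma sumOrder_imp {M : Type*} {A : Set M} {r : M → M → Prop} {a b : M}
    (h : sumOrder A r a b) : a ∈ A ∨ r a b := by
  rcases h with ⟨h1, _⟩ | ⟨h1, _, _⟩ | ⟨_, _, h3⟩
  · exact Or.inl h1
  · exact Or.inl h1
  · exact Or.inr h3

/-- The sum of an F-ordering of `M` over `A` is again an F-ordering of `M` over `A`, has `A`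
as an initial segment, and is a well-order whenever the original order was. -/
theorem sum_FOrder {M : Type*} (op : M → M → M) (hSQ : IsSQ op) (A : Set M)
    (r : M → M → Prop) (h : IsFOrderOver op A r) :
    IsFOrderOver op A (sumOrder A r) ∧
      (∀ a ∈ A, ∀ b : M, sumOrder A r b a → b ∈ A) ∧
      (WellFounded r → WellFounded (sumOrder A r)) := by
  obtain ⟨hsto, hF⟩ := h
  haveI := hsto
  have htrans : ∀ a b c : M, sumOrder A r a b → sumOrder A r b c → sumOrder A r a c := by
    intro a b c hab hbc
    rcases hab with ⟨ha, hb⟩ | ⟨ha, hb, hr⟩ | ⟨ha, hb, hr⟩ <;>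
      rcases hbc with ⟨hb', hc⟩ | ⟨hb', hc, hr'⟩ | ⟨hb', hc, hr'⟩
    · exact absurd hb' hb
    · exact absurd hb' hb
    · exact Or.inl ⟨ha, hc⟩
    · exact Or.inl ⟨ha, hc⟩
    · exact Or.inr (Or.inl ⟨ha, hc, trans_of r hr hr'⟩)
    · exact absurd hb hb'
    · exact absurd hb' hb
    · exact absurd hb' hb
    · exact Or.inr (Or.inr ⟨ha, hc, trans_of r hr hr'⟩)
  have hirr : ∀ a : M, ¬ sumOrder A r a a := by
    intro a hs
    rcases hs with ⟨h1, h2⟩ | ⟨_, _, hr⟩ | ⟨_, _, hr⟩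
    · exact h2 h1
    · exact irrefl_of r a hr
    · exact irrefl_of r a hr
  have htri : ∀ a b : M, sumOrder A r a b ∨ a = b ∨ sumOrder A r b a := by
    intro a b
    by_cases ha : a ∈ A <;> by_cases hb : b ∈ A
    · rcases trichotomous_of r a b with hr | he | hr
      · exact Or.inl (Or.inr (Or.inl ⟨ha, hb, hr⟩))
      · exact Or.inr (Or.inl he)
      · exact Or.inr (Or.inr (Or.inr (Or.inl ⟨hb, ha, hr⟩)))
    · exact Or.inl (Or.inl ⟨ha, hb⟩)
    · exact Or.inr (Or.inr (Or.inl ⟨hb, ha⟩))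
    · rcases trichotomous_of r a b with hr | he | hr
      · exact Or.inl (Or.inr (Or.inr ⟨ha, hb, hr⟩))
      · exact Or.inr (Or.inl he)
      · exact Or.inr (Or.inr (Or.inr (Or.inr ⟨hb, ha, hr⟩)))
  haveI : IsTrichotomous M (sumOrder A r) := ⟨fun a b h1 h2 => ((htri a b).resolve_left h1).resolve_right h2⟩
  haveI : IsTrans M (sumOrder A r) := ⟨htrans⟩
  haveI : IsIrrefl M (sumOrder A r) := ⟨hirr⟩
  haveI : IsStrictOrder M (sumOrder A r) := ⟨⟩
  refine ⟨⟨⟨⟩, ?_⟩, ?_, ?_⟩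
  · intro a
    obtain ⟨a₁, a₂, heq, h1, h2, huniq⟩ := hF a
    by_cases ha : a ∈ A
    · refine ⟨a, a, (hSQ.2.1 a).symm, Or.inl ha, Or.inl ha, ?_⟩
      intro b₁ b₂ hb hc1 hc2
      have c1 : b₁ ∈ A ∨ r b₁ a := hc1.elim Or.inl sumOrder_imp
      have c2 : b₂ ∈ A ∨ r b₂ a := hc2.elim Or.inl sumOrder_imp
      have e1 := huniq b₁ b₂ hb c1 c2
      have e2 := huniq a a ((hSQ.2.1 a).symm) (Or.inl ha) (Or.inl ha)
      rw [e1, ← e2]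
    · refine ⟨a₁, a₂, heq, ?_, ?_, ?_⟩
      · by_cases ha1 : a₁ ∈ A
        · exact Or.inl ha1
        · exact Or.inr (Or.inr (Or.inr ⟨ha1, ha, h1.resolve_left ha1⟩))
      · by_cases ha2 : a₂ ∈ A
        · exact Or.inl ha2
        · exact Or.inr (Or.inr (Or.inr ⟨ha2, ha, h2.resolve_left ha2⟩))
      · intro b₁ b₂ hb hc1 hc2
        exact huniq b₁ b₂ hb (hc1.elim Or.inl sumOrder_imp) (hc2.elim Or.inl sumOrder_imp)
  · intro a haA b hb
    rcases hb with ⟨h1, h2⟩ | ⟨h1, _, _⟩ | ⟨_, h2, _⟩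
    · exact absurd haA h2
    · exact h1
    · exact absurd haA h2
  · intro hwf
    have hA : ∀ a, a ∈ A → Acc (sumOrder A r) a := by
      intro a
      induction a using hwf.induction with
      | _ a ih =>
        intro ha
        constructor
        intro b hb
        rcases hb with ⟨hbA, hnA⟩ | ⟨hbA, _, hr⟩ | ⟨_, hnA, _⟩
        · exact absurd ha hnA
        · exact ih b hr hbA
        · exact absurd ha hnA
    have hall : ∀ a, Acc (sumOrder A r) a := by
      intro a
      induction a using hwf.induction with
      | _ a ih =>
        by_cases ha : a ∈ A
        · exact hA a ha
        · constructor
          intro b hb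
          rcases hb with ⟨hbA, _⟩ | ⟨_, haA, _⟩ | ⟨_, _, hr⟩
          · exact hA b hbA
          · exact absurd haA ha
          · exact ih b hr
    exact ⟨hall⟩
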